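/- Let δ₁ > 0, δ₂ > 0, β > 0, let g(ρ) = δ₁ β ρ + δ₂ β² ρ², let s > 0, r > 0, and let h : [0,r] → (0,∞) be differentiable with h'(τ) = -2 g(h(τ)) h(τ) for all τ ∈ [0,r] and h(0) = s. Then ∫_0^r β h(τ) dτ = -(1/(2δ₁)) ln[ h(r) (δ₁ + δ₂ β s) / ( s (δ₁ + δ₂ β h(r)) ) ]. -/

import Mathlib

open Set intervalIntegral

/-- For the focusing cubic NLS with combined two- and three-body loss
g(ρ) = δ₁βρ + δ₂β²ρ², the phase integral G(s,r) = ∫_0^r β h(τ) dτ along a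
positive solution of h' = -2 g(h) h, h(0) = s, is
-(1/(2δ₁)) ln[ h(r)(δ₁ + δ₂βs) / (s(δ₁ + δ₂β h(r))) ]. -/
theorem stmt9 (δ₁ δ₂ β : ℝ) (hδ₁ : 0 < δ₁) (hδ₂ : 0 < δ₂) (hβ : 0 < β)
    (g : ℝ → ℝ) (hgdef : ∀ ρ : ℝ, g ρ = δ₁ * β * ρ + δ₂ * β ^ 2 * ρ ^ 2)
    (s r : ℝ) (hs : 0 < s) (hr : 0 < r)
    (h : ℝ → ℝ) (hpos : ∀ τ ∈ Set.Icc (0:ℝ) r, 0 < h τ)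
    (hODE : ∀ τ ∈ Set.Icc (0:ℝ) r, HasDerivAt h (-2 * g (h τ) * h τ) τ)
    (h0 : h 0 = s) :
    (∫ τ in (0:ℝ)..r, β * h τ) =
      -(1 / (2 * δ₁)) *
        Real.log (h r * (δ₁ + δ₂ * β * s) / (s * (δ₁ + δ₂ * β * h r))) := by
  set F : ℝ → ℝ := fun τ =>
    -(1 / (2 * δ₁)) * (Real.log (h τ) - Real.log (δ₁ + δ₂ * β * h τ)) with hF
  have huIcc : Set.uIcc (0:ℝ) r = Set.Icc 0 r := Set.uIcc_of_le hr.le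
  have hderiv : ∀ x ∈ Set.uIcc (0:ℝ) r, HasDerivAt F (β * h x) x := by
    intro x hx
    rw [huIcc] at hx
    have hxpos := hpos x hx
    have hxO := hODE x hx
    have hx2 : 0 < δ₁ + δ₂ * β * h x := by positivity
    have h1 : HasDerivAt (fun τ => Real.log (h τ))
        ((-2 * g (h x) * h x) / h x) x := hxO.log hxpos.ne'
    have h2 : HasDerivAt (fun τ => Real.log (δ₁ + δ₂ * β * h τ))
        ((δ₂ * β * (-2 * g (h x) * h x)) / (δ₁ + δ₂ * β * h x)) x := by
      exact (((hxO.const_mul (δ₂ * β)).const_add δ₁).log hx2.ne')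
    have := ((h1.sub h2).const_mul (-(1 / (2 * δ₁))))
    refine this.congr_deriv ?_
    rw [hgdef]
    field_simp
    ring
  have hcont : ContinuousOn h (Set.uIcc (0:ℝ) r) := by
    rw [huIcc]
    exact fun x hx => (hODE x hx).continuousAt.continuousWithinAt
  have hint : IntervalIntegrable (fun τ => β * h τ) MeasureTheory.volume 0 r :=
    ((continuousOn_const.mul hcont).intervalIntegrable)
  have key := intervalIntegral.integral_eq_sub_of_hasDerivAt hderiv hint
  rw [key, hF]
  have hrpos := hpos r (by constructor <;> [exact hr.le; rfl])
  have hbr : 0 < δ₁ + δ₂ * β * h r := by positivity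
  have hbs : 0 < δ₁ + δ₂ * β * s := by positivity
  simp only
  rw [h0]
  rw [Real.log_div (by positivity) (by positivity), Real.log_mul hrpos.ne' hbs.ne',
    Real.log_mul hs.ne' hbr.ne']
  ring
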